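/- Catalan's identity for Pell numbers: for all integers d, a: P(d)² − P(d−a)·P(d+a) = (−1)^(d−a) · P(a)², where (−1)^(d−a) denotes the integer power (−1)^(d−a) extended to integer exponents. -/

import Mathlib

namespace PellAux

def u : (ℤ√2)ˣ where
  val := ⟨1, 1⟩
  inv := ⟨-1, 1⟩
  val_inv := by ext <;> simp [Zsqrtd.re_mul, Zsqrtd.im_mul]
  inv_val := by ext <;> simp [Zsqrtd.re_mul, Zsqrtd.im_mul]

lemma u_re : (u : ℤ√2).re = 1 := rfl
lemma u_im : (u : ℤ√2).im = 1 := rfl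

lemma step (n : ℤ) :
    ((u ^ n : (ℤ√2)ˣ) : ℤ√2).re = ((u ^ (n-1) : (ℤ√2)ˣ) : ℤ√2).re + 2 * ((u ^ (n-1) : (ℤ√2)ˣ) : ℤ√2).im ∧
    ((u ^ n : (ℤ√2)ˣ) : ℤ√2).im = ((u ^ (n-1) : (ℤ√2)ˣ) : ℤ√2).re + ((u ^ (n-1) : (ℤ√2)ˣ) : ℤ√2).im := by
  have h : u ^ n = u ^ (n-1) * u := by rw [← zpow_add_one]; ring_nf
  rw [h]
  push_cast
  constructor <;> simp [Zsqrtd.re_mul, Zsqrtd.im_mul, u_re, u_im]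

lemma norm_pow (n : ℤ) :
    ((u ^ n : (ℤ√2)ˣ) : ℤ√2).re ^ 2 - 2 * ((u ^ n : (ℤ√2)ˣ) : ℤ√2).im ^ 2
      = (n.negOnePow : ℤ) := by
  have h := map_zpow (Units.map (Zsqrtd.normMonoidHom (d := 2))) u n
  have hu : Units.map (Zsqrtd.normMonoidHom (d := 2)) u = -1 := by
    ext
    simp [Zsqrtd.normMonoidHom, Zsqrtd.norm, u_re, u_im]
  rw [hu] at h
  have := congrArg (fun w : ℤˣ => (w : ℤ)) h
  simp only [Units.coe_map, Zsqrtd.normMonoidHom, MonoidHom.coe_mk, OneHom.coe_mk,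
    Zsqrtd.norm] at this
  rw [Int.negOnePow_def]
  rw [← this]
  ring

end PellAux

/-- Catalan's identity for Pell numbers extended to all integers. -/
theorem stmt_15 (P : ℤ → ℤ)
    (hP0 : P 0 = 0) (hP1 : P 1 = 1)
    (hP : ∀ n : ℤ, P n = 2 * P (n - 1) + P (n - 2))
    (d a : ℤ) :
    P d ^ 2 - P (d - a) * P (d + a) = ((d - a).negOnePow : ℤ) * P a ^ 2 := by
  open PellAux in
  have key : ∀ n : ℤ, P n = ((u ^ n : (ℤ√2)ˣ) : ℤ√2).im := by
    have frec : ∀ n : ℤ, ((u ^ n : (ℤ√2)ˣ) : ℤ√2).im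
        = 2 * ((u ^ (n-1) : (ℤ√2)ˣ) : ℤ√2).im + ((u ^ (n-2) : (ℤ√2)ˣ) : ℤ√2).im := by
      intro n
      obtain ⟨h1, h2⟩ := step n
      obtain ⟨h3, h4⟩ := step (n-1)
      rw [show n - 1 - 1 = n - 2 by ring] at h3 h4
      omega
    have main : ∀ n : ℤ, P n = ((u ^ n : (ℤ√2)ˣ) : ℤ√2).im
        ∧ P (n+1) = ((u ^ (n+1) : (ℤ√2)ˣ) : ℤ√2).im := by
      intro n
      induction n using Int.induction_on with
      | zero =>
        constructor
        · simpa using hP0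
        · simpa [PellAux.u_im] using hP1
      | succ k ih =>
        obtain ⟨ihk, ihk1⟩ := ih
        refine ⟨ihk1, ?_⟩
        have hr := hP ((k:ℤ) + 1 + 1)
        have fr := frec ((k:ℤ) + 1 + 1)
        rw [show (k:ℤ) + 1 + 1 - 1 = (k:ℤ) + 1 by ring, show (k:ℤ) + 1 + 1 - 2 = (k:ℤ) by ring] at hr fr
        omega
      | pred k ih =>
        obtain ⟨ihk, ihk1⟩ := ih
        refine ⟨?_, ?_⟩
        · have hr := hP (-(k:ℤ) + 1)
          have fr := frec (-(k:ℤ) + 1)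
          rw [show -(k:ℤ) + 1 - 1 = -(k:ℤ) by ring, show -(k:ℤ) + 1 - 2 = -(k:ℤ) - 1 by ring] at hr fr
          omega
        · rw [show -(k:ℤ) - 1 + 1 = -(k:ℤ) by ring]
          exact ihk
    exact fun n => (main n).1
  have hadd : u ^ (d + a) = u ^ d * u ^ a := zpow_add u d a
  have hsub : u ^ (d - a) * u ^ a = u ^ d := by rw [← zpow_add]; ring_nf
  have him_add : ((u ^ (d+a) : (ℤ√2)ˣ) : ℤ√2).im
      = ((u ^ d : (ℤ√2)ˣ) : ℤ√2).re * ((u ^ a : (ℤ√2)ˣ) : ℤ√2).im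
        + ((u ^ d : (ℤ√2)ˣ) : ℤ√2).im * ((u ^ a : (ℤ√2)ˣ) : ℤ√2).re := by
    rw [hadd, Units.val_mul, Zsqrtd.im_mul]
  have heq1 : ((u ^ (d-a) : (ℤ√2)ˣ) : ℤ√2).re * ((u ^ a : (ℤ√2)ˣ) : ℤ√2).re
        + 2 * ((u ^ (d-a) : (ℤ√2)ˣ) : ℤ√2).im * ((u ^ a : (ℤ√2)ˣ) : ℤ√2).im
      = ((u ^ d : (ℤ√2)ˣ) : ℤ√2).re := by
    conv_rhs => rw [← hsub]
    rw [Units.val_mul, Zsqrtd.re_mul]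
  have heq2 : ((u ^ (d-a) : (ℤ√2)ˣ) : ℤ√2).re * ((u ^ a : (ℤ√2)ˣ) : ℤ√2).im
        + ((u ^ (d-a) : (ℤ√2)ˣ) : ℤ√2).im * ((u ^ a : (ℤ√2)ˣ) : ℤ√2).re
      = ((u ^ d : (ℤ√2)ˣ) : ℤ√2).im := by
    conv_rhs => rw [← hsub]
    rw [Units.val_mul, Zsqrtd.im_mul]
  have hna := PellAux.norm_pow a
  have hnd := PellAux.norm_pow d
  rw [key d, key (d-a), key (d+a), key a, him_add]
  set x := ((u ^ d : (ℤ√2)ˣ) : ℤ√2).re with hxd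
  set y := ((u ^ d : (ℤ√2)ˣ) : ℤ√2).im with hyd
  set s := ((u ^ a : (ℤ√2)ˣ) : ℤ√2).re with hsa
  set t := ((u ^ a : (ℤ√2)ˣ) : ℤ√2).im with hta
  set r := ((u ^ (d-a) : (ℤ√2)ˣ) : ℤ√2).re with hrda
  set i := ((u ^ (d-a) : (ℤ√2)ˣ) : ℤ√2).im with hida
  set ea := ((a.negOnePow : ℤ)) with hea
  set ed := ((d.negOnePow : ℤ)) with hed
  set eda := (((d-a).negOnePow : ℤ)) with heda
  have hsq : ea ^ 2 = 1 := by
    rw [hea, ← Units.val_pow_eq_pow_val, Int.units_sq, Units.val_one]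
  have hprod : eda * ea = ed := by
    rw [hea, hed, heda, ← Units.val_mul, ← Int.negOnePow_add]
    ring_nf
  have hkey : i * ea = y * s - x * t := by
    linear_combination s * heq2 - t * heq1 - i * hna
  have hkey2 : i = ea * (y * s - x * t) := by
    linear_combination ea * hkey - i * hsq
  have hprod2 : eda = ed * ea := by
    linear_combination ea * hprod - eda * hsq
  linear_combination (-(x*t + y*s)) * hkey2 - t^2 * hprod2 - ea * y^2 * hna
    + ea * t^2 * hnd - y^2 * hsq
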